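/- arXiv:2105.11431 — 6 statements merged into one kernel-verified Lean document; each statement's English description precedes it below -/
import Mathlib

section
/- For every position (x,y) ∈ [n]², the number of squares (x',y') ∈ [n]² \ {(x,y)} with x'+y' ≡ x+y (mod n) but x'+y' ≠ x+y is exactly |x+y-(n+1)|, and the number of squares with x'-y' ≡ x-y (mod n) but x'-y' ≠ x-y is exactly |x-y|. -/
open scoped Classical

/-- The n×n board, identified with {1,…,n}². -/
noncomputable def board (n : ℕ) : Finset (ℤ × ℤ) := Finset.Icc 1 (n : ℤ) ×ˢ Finset.Icc 1 (n : ℤ)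

lemma pm_aux (n k a : ℤ) (hn : 0 < n) (hk : a = n * k) (h1 : -(2*n) < a)
    (h2 : a < 2*n) (h0 : a ≠ 0) : k = 1 ∨ k = -1 := by
  have hk0 : k ≠ 0 := by rintro rfl; simp at hk; exact h0 hk
  have hl : -2 < k := by nlinarith
  have hr : k < 2 := by nlinarith
  omega

lemma card_of_iff (S : Finset (ℤ × ℤ)) (lo hi : ℤ) (f : ℤ → ℤ)
    (h : ∀ p : ℤ × ℤ, p ∈ S ↔ lo ≤ p.1 ∧ p.1 ≤ hi ∧ p.2 = f p.1) :
    (S.card : ℤ) = max (hi + 1 - lo) 0 := by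
  have hS : S = (Finset.Icc lo hi).image (fun a => (a, f a)) := by
    ext p
    simp only [h, Finset.mem_image, Finset.mem_Icc]
    constructor
    · rintro ⟨h1, h2, h3⟩
      exact ⟨p.1, ⟨h1, h2⟩, by rw [← h3]⟩
    · rintro ⟨a, ⟨ha1, ha2⟩, rfl⟩
      exact ⟨ha1, ha2, rfl⟩
  rw [hS, Finset.card_image_of_injective _ (fun a b hab => congrArg Prod.fst hab),
    Int.card_Icc, Int.toNat_eq_max]

/-- The number of squares sharing a toroidal, but not a non-toroidal, diagonal with (x,y)
is |x+y-(n+1)| for the sum-type, and |x-y| for the difference-type. -/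
theorem far_diagonal_card (n : ℕ) (hn : 0 < n) (x y : ℤ)
    (hx : x ∈ Finset.Icc 1 (n : ℤ)) (hy : y ∈ Finset.Icc 1 (n : ℤ)) :
    (((board n).filter (fun p => p ≠ (x, y) ∧
        p.1 + p.2 ≡ x + y [ZMOD (n : ℤ)] ∧ p.1 + p.2 ≠ x + y)).card : ℤ)
      = |x + y - ((n : ℤ) + 1)| ∧
    (((board n).filter (fun p => p ≠ (x, y) ∧
        p.1 - p.2 ≡ x - y [ZMOD (n : ℤ)] ∧ p.1 - p.2 ≠ x - y)).card : ℤ)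
      = |x - y| := by
  simp only [Finset.mem_Icc] at hx hy
  have hn' : (0:ℤ) < n := by exact_mod_cast hn
  constructor
  · -- sum case
    rcases le_or_gt (x + y) ((n:ℤ) + 1) with hc | hc
    · have key : ∀ p : ℤ × ℤ,
          p ∈ (board n).filter (fun p => p ≠ (x, y) ∧
            p.1 + p.2 ≡ x + y [ZMOD (n : ℤ)] ∧ p.1 + p.2 ≠ x + y) ↔
          x + y ≤ p.1 ∧ p.1 ≤ (n:ℤ) ∧ p.2 = x + y + n - p.1 := by
        intro p
        simp only [board, Finset.mem_filter, Finset.mem_product, Finset.mem_Icc]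
        constructor
        · rintro ⟨⟨⟨h1, h2⟩, h3, h4⟩, hne, hmod, hsum⟩
          obtain ⟨k, hk⟩ := Int.modEq_iff_dvd.mp hmod
          have hpm := pm_aux n k (x + y - (p.1 + p.2)) hn' hk (by omega) (by omega) (by omega)
          rcases hpm with rfl | rfl <;> simp only [mul_one, mul_neg_one] at hk <;>
            refine ⟨by omega, by omega, by omega⟩
        · rintro ⟨h1, h2, h3⟩
          refine ⟨⟨⟨by omega, by omega⟩, by omega, by omega⟩, ?_, ?_, by omega⟩
          · intro heq
            rw [heq] at h3
            simp at h3
            omega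
          · exact Int.modEq_iff_dvd.mpr ⟨-1, by omega⟩
      rw [card_of_iff _ (x + y) n (fun a => x + y + n - a) key, abs_of_nonpos (by omega)]
      omega
    · have key : ∀ p : ℤ × ℤ,
          p ∈ (board n).filter (fun p => p ≠ (x, y) ∧
            p.1 + p.2 ≡ x + y [ZMOD (n : ℤ)] ∧ p.1 + p.2 ≠ x + y) ↔
          1 ≤ p.1 ∧ p.1 ≤ x + y - n - 1 ∧ p.2 = x + y - n - p.1 := by
        intro p
        simp only [board, Finset.mem_filter, Finset.mem_product, Finset.mem_Icc]
        constructor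
        · rintro ⟨⟨⟨h1, h2⟩, h3, h4⟩, hne, hmod, hsum⟩
          obtain ⟨k, hk⟩ := Int.modEq_iff_dvd.mp hmod
          have hpm := pm_aux n k (x + y - (p.1 + p.2)) hn' hk (by omega) (by omega) (by omega)
          rcases hpm with rfl | rfl <;> simp only [mul_one, mul_neg_one] at hk <;>
            refine ⟨by omega, by omega, by omega⟩
        · rintro ⟨h1, h2, h3⟩
          refine ⟨⟨⟨by omega, by omega⟩, by omega, by omega⟩, ?_, ?_, by omega⟩
          · intro heq
            rw [heq] at h3
            simp at h3
            omega
          · exact Int.modEq_iff_dvd.mpr ⟨1, by omega⟩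
      rw [card_of_iff _ 1 (x + y - n - 1) (fun a => x + y - n - a) key, abs_of_nonneg (by omega)]
      omega
  · -- difference case
    rcases le_or_gt 0 (x - y) with hc | hc
    · have key : ∀ p : ℤ × ℤ,
          p ∈ (board n).filter (fun p => p ≠ (x, y) ∧
            p.1 - p.2 ≡ x - y [ZMOD (n : ℤ)] ∧ p.1 - p.2 ≠ x - y) ↔
          1 ≤ p.1 ∧ p.1 ≤ x - y ∧ p.2 = p.1 + n - (x - y) := by
        intro p
        simp only [board, Finset.mem_filter, Finset.mem_product, Finset.mem_Icc]
        constructor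
        · rintro ⟨⟨⟨h1, h2⟩, h3, h4⟩, hne, hmod, hsum⟩
          obtain ⟨k, hk⟩ := Int.modEq_iff_dvd.mp hmod
          have hpm := pm_aux n k (x - y - (p.1 - p.2)) hn' hk (by omega) (by omega) (by omega)
          rcases hpm with rfl | rfl <;> simp only [mul_one, mul_neg_one] at hk <;>
            refine ⟨by omega, by omega, by omega⟩
        · rintro ⟨h1, h2, h3⟩
          refine ⟨⟨⟨by omega, by omega⟩, by omega, by omega⟩, ?_, ?_, by omega⟩
          · intro heq
            rw [heq] at h3
            simp at h3
            omega
          · exact Int.modEq_iff_dvd.mpr ⟨1, by omega⟩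
      rw [card_of_iff _ 1 (x - y) (fun a => a + n - (x - y)) key, abs_of_nonneg (by omega)]
      omega
    · have key : ∀ p : ℤ × ℤ,
          p ∈ (board n).filter (fun p => p ≠ (x, y) ∧
            p.1 - p.2 ≡ x - y [ZMOD (n : ℤ)] ∧ p.1 - p.2 ≠ x - y) ↔
          x - y + n + 1 ≤ p.1 ∧ p.1 ≤ (n:ℤ) ∧ p.2 = p.1 - (x - y) - n := by
        intro p
        simp only [board, Finset.mem_filter, Finset.mem_product, Finset.mem_Icc]
        constructor
        · rintro ⟨⟨⟨h1, h2⟩, h3, h4⟩, hne, hmod, hsum⟩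
          obtain ⟨k, hk⟩ := Int.modEq_iff_dvd.mp hmod
          have hpm := pm_aux n k (x - y - (p.1 - p.2)) hn' hk (by omega) (by omega) (by omega)
          rcases hpm with rfl | rfl <;> simp only [mul_one, mul_neg_one] at hk <;>
            refine ⟨by omega, by omega, by omega⟩
        · rintro ⟨h1, h2, h3⟩
          refine ⟨⟨⟨by omega, by omega⟩, by omega, by omega⟩, ?_, ?_, by omega⟩
          · intro heq
            rw [heq] at h3
            simp at h3
            omega
          · exact Int.modEq_iff_dvd.mpr ⟨-1, by omega⟩
      rw [card_of_iff _ (x - y + n + 1) n (fun a => a - (x - y) - n) key, abs_of_nonpos (by omega)]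
      omega
end

section
/- Let Q ⊆ [n]² be a partial n-queens configuration, let (r,c) ∈ [n]², and let (x,y) ∈ Q be an absorber for (r,c) in Q: i.e., (x,y) shares no diagonal with (r,c), and none of the four diagonals through (r,y) and (x,c) contains a point of Q other than possibly (x,y) itself. Then Q' := (Q \ {(x,y)}) ∪ {(r,y),(x,c)} is a partial n-queens configuration of size |Q|+1 that covers exactly the rows covered by Q together with row r, and exactly the columns covered by Q together with column c, provided row r and column c are not covered by Q. -/
open scoped Classical

/-- A partial n-queens configuration: at most one queen in each row, column, and
(non-toroidal) diagonal. -/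
def IsPartialConfig (n : ℕ) (Q : Finset (ℤ × ℤ)) : Prop :=
  Q ⊆ board n ∧ ∀ p ∈ Q, ∀ q ∈ Q, p ≠ q →
    p.1 ≠ q.1 ∧ p.2 ≠ q.2 ∧ p.1 + p.2 ≠ q.1 + q.2 ∧ p.1 - p.2 ≠ q.1 - q.2

/-- An absorber swap yields a partial configuration covering additionally exactly
row r and column c. -/
theorem absorber_swap (n : ℕ) (Q : Finset (ℤ × ℤ)) (hQ : IsPartialConfig n Q)
    (r c x y : ℤ) (hrc : (r, c) ∈ board n) (hxy : (x, y) ∈ Q)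
    (hd1 : x + y ≠ r + c) (hd2 : x - y ≠ r - c)
    (hfree : ∀ q ∈ Q, q ≠ (x, y) →
      q.1 + q.2 ≠ r + y ∧ q.1 - q.2 ≠ r - y ∧ q.1 + q.2 ≠ x + c ∧ q.1 - q.2 ≠ x - c)
    (hrow : ∀ q ∈ Q, q.1 ≠ r) (hcol : ∀ q ∈ Q, q.2 ≠ c) :
    IsPartialConfig n ((Q.erase (x, y)) ∪ {(r, y), (x, c)}) ∧
    ((Q.erase (x, y)) ∪ {(r, y), (x, c)}).card = Q.card + 1 ∧
    (∀ a : ℤ, (∃ q ∈ (Q.erase (x, y)) ∪ {(r, y), (x, c)}, q.1 = a) ↔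
      (∃ q ∈ Q, q.1 = a) ∨ a = r) ∧
    (∀ b : ℤ, (∃ q ∈ (Q.erase (x, y)) ∪ {(r, y), (x, c)}, q.2 = b) ↔
      (∃ q ∈ Q, q.2 = b) ∨ b = c) := by
  obtain ⟨hsub, hpair⟩ := hQ
  have hxr : x ≠ r := hrow _ hxy
  have hyc : y ≠ c := hcol _ hxy
  have hxyb := hsub hxy
  simp only [board, Finset.mem_product, Finset.mem_Icc] at hxyb hrc
  have hryb : (r, y) ∈ board n := by
    simp only [board, Finset.mem_product, Finset.mem_Icc]; exact ⟨hrc.1, hxyb.2⟩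
  have hxcb : (x, c) ∈ board n := by
    simp only [board, Finset.mem_product, Finset.mem_Icc]; exact ⟨hxyb.1, hrc.2⟩
  have hcolu : ∀ q ∈ Q, q.2 = y → q = (x, y) := by
    intro q hq hq2
    by_contra h
    exact (hpair q hq (x, y) hxy h).2.1 hq2
  have hrowu : ∀ q ∈ Q, q.1 = x → q = (x, y) := by
    intro q hq hq1
    by_contra h
    exact (hpair q hq (x, y) hxy h).1 hq1
  have hryQ : (r, y) ∉ Q := fun h => hrow _ h rfl
  have hxcQ : (x, c) ∉ Q := fun h => hcol _ h rfl
  have hne : ((r, y) : ℤ × ℤ) ≠ (x, c) := fun h => hxr (congrArg Prod.fst h).symm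
  have A : ∀ q ∈ Q, q ≠ (x, y) →
      q.1 ≠ r ∧ q.2 ≠ y ∧ q.1 + q.2 ≠ r + y ∧ q.1 - q.2 ≠ r - y := by
    intro q hq hne'
    exact ⟨hrow q hq, fun h => hne' (hcolu q hq h), (hfree q hq hne').1,
      (hfree q hq hne').2.1⟩
  have B : ∀ q ∈ Q, q ≠ (x, y) →
      q.1 ≠ x ∧ q.2 ≠ c ∧ q.1 + q.2 ≠ x + c ∧ q.1 - q.2 ≠ x - c := by
    intro q hq hne'
    exact ⟨fun h => hne' (hrowu q hq h), hcol q hq, (hfree q hq hne').2.2.1,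
      (hfree q hq hne').2.2.2⟩
  have symm : ∀ p q : ℤ × ℤ,
      (p.1 ≠ q.1 ∧ p.2 ≠ q.2 ∧ p.1 + p.2 ≠ q.1 + q.2 ∧ p.1 - p.2 ≠ q.1 - q.2) →
      (q.1 ≠ p.1 ∧ q.2 ≠ p.2 ∧ q.1 + q.2 ≠ p.1 + p.2 ∧ q.1 - q.2 ≠ p.1 - p.2) :=
    fun p q h => ⟨h.1.symm, h.2.1.symm, h.2.2.1.symm, h.2.2.2.symm⟩
  have hC : ((r, y) : ℤ × ℤ).1 ≠ (x, c).1 ∧ ((r, y) : ℤ × ℤ).2 ≠ (x, c).2 ∧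
      ((r, y) : ℤ × ℤ).1 + (r, y).2 ≠ (x, c).1 + (x, c).2 ∧
      ((r, y) : ℤ × ℤ).1 - (r, y).2 ≠ (x, c).1 - (x, c).2 := by
    refine ⟨Ne.symm hxr, hyc, ?_, ?_⟩ <;> simp only [] <;> omega
  refine ⟨⟨?_, ?_⟩, ?_, ?_, ?_⟩
  · intro p hp
    simp only [Finset.mem_union, Finset.mem_insert, Finset.mem_singleton] at hp
    rcases hp with hp | rfl | rfl
    · exact hsub (Finset.mem_of_mem_erase hp)
    · exact hryb
    · exact hxcb
  · intro p hp q hq hpq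
    simp only [Finset.mem_union, Finset.mem_insert, Finset.mem_singleton,
      Finset.mem_erase] at hp hq
    rcases hp with ⟨hp1, hp2⟩ | rfl | rfl <;> rcases hq with ⟨hq1, hq2⟩ | rfl | rfl
    · exact hpair p hp2 q hq2 hpq
    · exact A p hp2 hp1
    · exact B p hp2 hp1
    · exact symm _ _ (A q hq2 hq1)
    · exact absurd rfl hpq
    · exact hC
    · exact symm _ _ (B q hq2 hq1)
    · exact symm _ _ hC
    · exact absurd rfl hpq
  · have hdisj : Disjoint (Q.erase (x, y)) ({(r, y), (x, c)} : Finset (ℤ × ℤ)) := by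
      rw [Finset.disjoint_right]
      intro a ha
      simp only [Finset.mem_insert, Finset.mem_singleton] at ha
      rcases ha with rfl | rfl <;> simp [Finset.mem_erase, hryQ, hxcQ]
    rw [Finset.card_union_of_disjoint hdisj, Finset.card_erase_of_mem hxy,
      Finset.card_pair hne]
    have : 1 ≤ Q.card := Finset.card_pos.mpr ⟨_, hxy⟩
    omega
  · intro a
    constructor
    · rintro ⟨q, hq, rfl⟩
      simp only [Finset.mem_union, Finset.mem_insert, Finset.mem_singleton,
        Finset.mem_erase] at hq
      rcases hq with ⟨_, h2⟩ | rfl | rfl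
      · exact Or.inl ⟨q, h2, rfl⟩
      · exact Or.inr rfl
      · exact Or.inl ⟨(x, y), hxy, rfl⟩
    · rintro (⟨q, hq, rfl⟩ | ha)
      · by_cases h : q = (x, y)
        · subst h; exact ⟨(x, c), by simp, rfl⟩
        · exact ⟨q, by simp [Finset.mem_erase, h, hq], rfl⟩
      · exact ⟨(r, y), by simp, ha.symm⟩
  · intro b
    constructor
    · rintro ⟨q, hq, rfl⟩
      simp only [Finset.mem_union, Finset.mem_insert, Finset.mem_singleton,
        Finset.mem_erase] at hq
      rcases hq with ⟨_, h2⟩ | rfl | rfl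
      · exact Or.inl ⟨q, h2, rfl⟩
      · exact Or.inl ⟨(x, y), hxy, rfl⟩
      · exact Or.inr rfl
    · rintro (⟨q, hq, rfl⟩ | hb)
      · by_cases h : q = (x, y)
        · subst h; exact ⟨(r, y), by simp, rfl⟩
        · exact ⟨q, by simp [Finset.mem_erase, h, hq], rfl⟩
      · exact ⟨(x, c), by simp, hb.symm⟩
end

section
/- Let P₁, P₂ ⊆ [n]² be partial n-queens configurations with P₂ obtained from P₁ by adding one queen. Then for every (r,c) ∈ [n]², |B_{P₂}(r,c)| ≥ |B_{P₁}(r,c)| - 4. -/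
open scoped Classical

/-- The set B_Q(r,c) of absorbers for (r,c) in Q. -/
def absorbers (Q : Finset (ℤ × ℤ)) (r c : ℤ) : Finset (ℤ × ℤ) :=
  Q.filter (fun p =>
    p.1 + p.2 ≠ r + c ∧ p.1 - p.2 ≠ r - c ∧
    ∀ q ∈ Q, q ≠ p →
      q.1 + q.2 ≠ r + p.2 ∧ q.1 - q.2 ≠ r - p.2 ∧
      q.1 + q.2 ≠ p.1 + c ∧ q.1 - q.2 ≠ p.1 - c)

lemma filter_snd_card_le (n : ℕ) (Q : Finset (ℤ × ℤ)) (h : IsPartialConfig n Q) (t : ℤ) :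
    (Q.filter (fun a => a.2 = t)).card ≤ 1 := by
  rw [Finset.card_le_one]
  intro a ha b hb
  simp only [Finset.mem_filter] at ha hb
  by_contra hab
  exact (h.2 a ha.1 b hb.1 hab).2.1 (ha.2.trans hb.2.symm)

lemma filter_fst_card_le (n : ℕ) (Q : Finset (ℤ × ℤ)) (h : IsPartialConfig n Q) (t : ℤ) :
    (Q.filter (fun a => a.1 = t)).card ≤ 1 := by
  rw [Finset.card_le_one]
  intro a ha b hb
  simp only [Finset.mem_filter] at ha hb
  by_contra hab
  exact (h.2 a ha.1 b hb.1 hab).1 (ha.2.trans hb.2.symm)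

/-- Adding one queen destroys at most four absorbers. -/
theorem absorbers_add_queen (n : ℕ) (P₁ P₂ : Finset (ℤ × ℤ))
    (h₁ : IsPartialConfig n P₁) (h₂ : IsPartialConfig n P₂)
    (p : ℤ × ℤ) (hp : p ∉ P₁) (hP₂ : P₂ = insert p P₁)
    (r c : ℤ) (hrc : (r, c) ∈ board n) :
    (absorbers P₁ r c).card - 4 ≤ (absorbers P₂ r c).card := by
  classical
  set S₁ := absorbers P₁ r c with hS₁
  set S₂ := absorbers P₂ r c with hS₂
  have hsub : S₁ \ S₂ ⊆ ((P₁.filter (fun a => a.2 = p.1 + p.2 - r)) ∪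
      (P₁.filter (fun a => a.2 = r - (p.1 - p.2))) ∪
      (P₁.filter (fun a => a.1 = p.1 + p.2 - c))) ∪
      (P₁.filter (fun a => a.1 = p.1 - p.2 + c)) := by
    intro a ha
    rw [Finset.mem_sdiff] at ha
    obtain ⟨ha1, ha2⟩ := ha
    rw [hS₁, absorbers, Finset.mem_filter] at ha1
    obtain ⟨haP, hd1, hd2, hq⟩ := ha1
    have haP2 : a ∈ P₂ := by rw [hP₂]; exact Finset.mem_insert_of_mem haP
    by_contra hcon
    apply ha2
    rw [hS₂, absorbers, Finset.mem_filter]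
    refine ⟨haP2, hd1, hd2, ?_⟩
    intro q hqP2 hqa
    rw [hP₂, Finset.mem_insert] at hqP2
    rcases hqP2 with rfl | hqP1
    · simp only [Finset.mem_union, Finset.mem_filter] at hcon
      push_neg at hcon
      obtain ⟨⟨⟨h1, h2⟩, h3⟩, h4⟩ := hcon
      have e1 := h1 haP
      have e2 := h2 haP
      have e3 := h3 haP
      have e4 := h4 haP
      refine ⟨by omega, by omega, by omega, by omega⟩
    · exact hq q hqP1 hqa
  have hcard : (S₁ \ S₂).card ≤ 4 := by
    calc (S₁ \ S₂).card ≤ _ := Finset.card_le_card hsub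
    _ ≤ _ + _ := Finset.card_union_le _ _
    _ ≤ 4 := by
        have := Finset.card_union_le ((P₁.filter (fun a => a.2 = p.1 + p.2 - r)) ∪
          (P₁.filter (fun a => a.2 = r - (p.1 - p.2)))) (P₁.filter (fun a => a.1 = p.1 + p.2 - c))
        have := Finset.card_union_le (P₁.filter (fun a => a.2 = p.1 + p.2 - r))
          (P₁.filter (fun a => a.2 = r - (p.1 - p.2)))
        have := filter_snd_card_le n P₁ h₁ (p.1 + p.2 - r)
        have := filter_snd_card_le n P₁ h₁ (r - (p.1 - p.2))
        have := filter_fst_card_le n P₁ h₁ (p.1 + p.2 - c)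
        have := filter_fst_card_le n P₁ h₁ (p.1 - p.2 + c)
        omega
  have hS : S₁ ⊆ (S₁ \ S₂) ∪ S₂ := by
    intro a ha
    by_cases h : a ∈ S₂
    · exact Finset.mem_union_right _ h
    · exact Finset.mem_union_left _ (Finset.mem_sdiff.mpr ⟨ha, h⟩)
  have := Finset.card_le_card hS
  have := Finset.card_union_le (S₁ \ S₂) S₂
  omega
end

section
/- Suppose Q ⊆ [n]² is a partial n-queens configuration with |Q| = T that is 10(n-T)-absorbing, i.e., |B_Q(r,c)| ≥ 10(n-T) for every (r,c) ∈ [n]². Then the absorption procedure succeeds: Q can be extended, by k := n-T iterated absorber swaps (each removing one queen and adding two), to an n-queens configuration of size n. More precisely, for any choice of matching between uncovered rows and uncovered columns, at each of the k steps the current configuration has at least one absorber for the current (row, column) pair. -/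
open scoped Classical

lemma mem_absorbers {Q : Finset (ℤ × ℤ)} {r c : ℤ} {p : ℤ × ℤ} :
    p ∈ absorbers Q r c ↔ p ∈ Q ∧ p.1 + p.2 ≠ r + c ∧ p.1 - p.2 ≠ r - c ∧
    ∀ q ∈ Q, q ≠ p →
      q.1 + q.2 ≠ r + p.2 ∧ q.1 - q.2 ≠ r - p.2 ∧
      q.1 + q.2 ≠ p.1 + c ∧ q.1 - q.2 ≠ p.1 - c := by
  simp [absorbers, Finset.mem_filter, and_assoc]

lemma row_eq {n : ℕ} {Q : Finset (ℤ × ℤ)} (hQ : IsPartialConfig n Q)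
    {a b : ℤ × ℤ} (ha : a ∈ Q) (hb : b ∈ Q) (h : a.1 = b.1) : a = b := by
  by_contra hne
  exact (hQ.2 a ha b hb hne).1 h

lemma col_eq {n : ℕ} {Q : Finset (ℤ × ℤ)} (hQ : IsPartialConfig n Q)
    {a b : ℤ × ℤ} (ha : a ∈ Q) (hb : b ∈ Q) (h : a.2 = b.2) : a = b := by
  by_contra hne
  exact (hQ.2 a ha b hb hne).2.1 h

lemma filter_col_card {n : ℕ} {Q : Finset (ℤ × ℤ)} (hQ : IsPartialConfig n Q) (v : ℤ) :
    (Q.filter (fun q => q.2 = v)).card ≤ 1 := by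
  apply Finset.card_le_one.mpr
  intro a ha b hb
  simp only [Finset.mem_filter] at ha hb
  exact col_eq hQ ha.1 hb.1 (ha.2.trans hb.2.symm)

lemma filter_row_card {n : ℕ} {Q : Finset (ℤ × ℤ)} (hQ : IsPartialConfig n Q) (v : ℤ) :
    (Q.filter (fun q => q.1 = v)).card ≤ 1 := by
  apply Finset.card_le_one.mpr
  intro a ha b hb
  simp only [Finset.mem_filter] at ha hb
  exact row_eq hQ ha.1 hb.1 (ha.2.trans hb.2.symm)

lemma absorbers_card_step {n : ℕ} {Q : Finset (ℤ × ℤ)} (hQ : IsPartialConfig n Q)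
    {r0 c0 : ℤ} {p : ℤ × ℤ} (_hp : p ∈ absorbers Q r0 c0) (r c : ℤ) :
    (absorbers Q r c).card ≤
      (absorbers ((Q.erase p) ∪ {(r0, p.2), (p.1, c0)}) r c).card + 10 := by
  set Q' : Finset (ℤ × ℤ) := (Q.erase p) ∪ {(r0, p.2), (p.1, c0)} with hQ'def
  set S : Finset (ℤ × ℤ) :=
    ((((((({p} ∪ Q.filter (fun q => q.2 = r0 + p.2 - r)) ∪
      Q.filter (fun q => q.2 = r - r0 + p.2)) ∪
      Q.filter (fun q => q.1 = r0 + p.2 - c)) ∪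
      Q.filter (fun q => q.1 = r0 - p.2 + c)) ∪
      Q.filter (fun q => q.2 = p.1 + c0 - r)) ∪
      Q.filter (fun q => q.2 = r - p.1 + c0)) ∪
      Q.filter (fun q => q.1 = p.1 + c0 - c)) ∪
      Q.filter (fun q => q.1 = p.1 - c0 + c) with hSdef
  have cu : ∀ (A B : Finset (ℤ × ℤ)) (m l : ℕ), A.card ≤ m → B.card ≤ l →
      (A ∪ B).card ≤ m + l := fun A B m l hA hB =>
    le_trans (Finset.card_union_le _ _) (add_le_add hA hB)
  have hScard : S.card ≤ 10 := by
    have h1 : ({p} : Finset (ℤ × ℤ)).card ≤ 1 := by simp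
    have step : ∀ {A B : Finset (ℤ × ℤ)} {m : ℕ}, A.card ≤ m → B.card ≤ 1 →
        (A ∪ B).card ≤ m + 1 := fun hA hB =>
      le_trans (Finset.card_union_le _ _) (add_le_add hA hB)
    have : S.card ≤ 1+1+1+1+1+1+1+1+1 :=
      step (step (step (step (step (step (step (step h1
        (filter_col_card hQ _)) (filter_col_card hQ _)) (filter_row_card hQ _))
        (filter_row_card hQ _)) (filter_col_card hQ _)) (filter_col_card hQ _))
        (filter_row_card hQ _)) (filter_row_card hQ _)
    omega
  have hsub : absorbers Q r c \ S ⊆ absorbers Q' r c := by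
    intro q hq
    rw [Finset.mem_sdiff] at hq
    obtain ⟨hqa, hqS⟩ := hq
    rw [mem_absorbers] at hqa
    obtain ⟨hqQ, hq1, hq2, hqfar⟩ := hqa
    simp only [hSdef, Finset.mem_union, Finset.mem_singleton, Finset.mem_filter,
      not_or, not_and] at hqS
    obtain ⟨⟨⟨⟨⟨⟨⟨⟨hne, e1⟩, e2⟩, e3⟩, e4⟩, e5⟩, e6⟩, e7⟩, e8⟩ := hqS
    have e1' := e1 hqQ; have e2' := e2 hqQ; have e3' := e3 hqQ; have e4' := e4 hqQ
    have e5' := e5 hqQ; have e6' := e6 hqQ; have e7' := e7 hqQ; have e8' := e8 hqQ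
    rw [mem_absorbers]
    refine ⟨?_, hq1, hq2, ?_⟩
    · exact Finset.mem_union_left _ (Finset.mem_erase.mpr ⟨hne, hqQ⟩)
    · intro q' hq' hq'ne
      simp only [hQ'def, Finset.mem_union, Finset.mem_erase, Finset.mem_insert,
        Finset.mem_singleton] at hq'
      rcases hq' with ⟨hq'p, hq'Q⟩ | h1 | h2
      · exact hqfar q' hq'Q hq'ne
      · subst h1; refine ⟨?_, ?_, ?_, ?_⟩ <;> simp only [] <;> omega
      · subst h2; refine ⟨?_, ?_, ?_, ?_⟩ <;> simp only [] <;> omega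
  calc (absorbers Q r c).card ≤ (absorbers Q r c \ S).card + S.card :=
        Finset.card_le_card_sdiff_add_card
    _ ≤ (absorbers Q' r c).card + 10 := add_le_add (Finset.card_le_card hsub) hScard

lemma absorption_aux (k : ℕ) : ∀ (n : ℕ) (Q : Finset (ℤ × ℤ)),
    IsPartialConfig n Q → Q.card + k = n →
    (∀ r c : ℤ, (r, c) ∈ board n → 10 * k ≤ (absorbers Q r c).card) →
    ∀ (r c : Fin k → ℤ), Function.Injective r → Function.Injective c →
    (∀ i, r i ∈ Finset.Icc 1 (n : ℤ)) → (∀ i, c i ∈ Finset.Icc 1 (n : ℤ)) →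
    (∀ a ∈ Finset.Icc 1 (n : ℤ), ((∀ q ∈ Q, q.1 ≠ a) ↔ ∃ i, r i = a)) →
    (∀ b ∈ Finset.Icc 1 (n : ℤ), ((∀ q ∈ Q, q.2 ≠ b) ↔ ∃ i, c i = b)) →
    ∃ R : Fin (k + 1) → Finset (ℤ × ℤ), R 0 = Q ∧
      (∀ i : Fin k, ∃ p ∈ absorbers (R i.castSucc) (r i) (c i),
        R i.succ = ((R i.castSucc).erase p) ∪ {(r i, p.2), (p.1, c i)}) ∧
      IsPartialConfig n (R (Fin.last k)) ∧ (R (Fin.last k)).card = n := by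
  induction k with
  | zero =>
    intro n Q hQ hcard habs r c _ _ _ _ _ _
    exact ⟨fun _ => Q, rfl, fun i => i.elim0, hQ, by simpa using hcard⟩
  | succ k IH =>
    intro n Q hQ hcard habs r c hrinj hcinj hrmem hcmem hrcover hccover
    -- Step 1: pick an absorber for (r 0, c 0)
    have hb0 : ((r 0 : ℤ), (c 0 : ℤ)) ∈ board n := by
      simp [board, Finset.mem_product, hrmem 0, hcmem 0]
    have hpos : 0 < (absorbers Q (r 0) (c 0)).card :=
      lt_of_lt_of_le (by positivity) (habs (r 0) (c 0) hb0)
    obtain ⟨p, hp⟩ := Finset.card_pos.mp hpos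
    have hpmem := hp
    rw [mem_absorbers] at hpmem
    obtain ⟨hpQ, hd1, hd2, hfar⟩ := hpmem
    have hr0 : ∀ q ∈ Q, q.1 ≠ r 0 := (hrcover (r 0) (hrmem 0)).mpr ⟨0, rfl⟩
    have hc0 : ∀ q ∈ Q, q.2 ≠ c 0 := (hccover (c 0) (hcmem 0)).mpr ⟨0, rfl⟩
    set n1 : ℤ × ℤ := (r 0, p.2) with hn1def
    set n2 : ℤ × ℤ := (p.1, c 0) with hn2def
    set Q' : Finset (ℤ × ℤ) := (Q.erase p) ∪ {n1, n2} with hQ'def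
    have hn1Q : n1 ∉ Q := fun h => hr0 n1 h rfl
    have hn2Q : n2 ∉ Q := fun h => hc0 n2 h rfl
    have hrp1 : r 0 ≠ p.1 := fun h => hr0 p hpQ h.symm
    have hcp2 : c 0 ≠ p.2 := fun h => hc0 p hpQ h.symm
    have hn12 : n1 ≠ n2 := fun h => hrp1 (congrArg Prod.fst h)
    -- membership characterization of Q'
    have hmemQ' : ∀ q, q ∈ Q' ↔ (q ∈ Q ∧ q ≠ p) ∨ q = n1 ∨ q = n2 := by
      intro q
      simp only [hQ'def, Finset.mem_union, Finset.mem_erase, Finset.mem_insert,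
        Finset.mem_singleton, and_comm]
    -- rows of Q'
    have hrowQ' : ∀ a : ℤ, (∀ q ∈ Q', q.1 ≠ a) ↔ (∀ q ∈ Q, q.1 ≠ a) ∧ a ≠ r 0 := by
      intro a
      constructor
      · intro h
        refine ⟨fun q hq => ?_, fun h' => h n1 ((hmemQ' n1).mpr (Or.inr (Or.inl rfl))) h'.symm⟩
        by_cases hqp : q = p
        · subst hqp
          exact h n2 ((hmemQ' n2).mpr (Or.inr (Or.inr rfl))) 
        · exact h q ((hmemQ' q).mpr (Or.inl ⟨hq, hqp⟩))
      · rintro ⟨h1, h2⟩ q hq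
        rcases (hmemQ' q).mp hq with ⟨hqQ, _⟩ | rfl | rfl
        · exact h1 q hqQ
        · exact fun h => h2 h.symm
        · exact h1 p hpQ
    have hcolQ' : ∀ b : ℤ, (∀ q ∈ Q', q.2 ≠ b) ↔ (∀ q ∈ Q, q.2 ≠ b) ∧ b ≠ c 0 := by
      intro b
      constructor
      · intro h
        refine ⟨fun q hq => ?_, fun h' => h n2 ((hmemQ' n2).mpr (Or.inr (Or.inr rfl))) h'.symm⟩
        by_cases hqp : q = p
        · subst hqp
          exact h n1 ((hmemQ' n1).mpr (Or.inr (Or.inl rfl)))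
        · exact h q ((hmemQ' q).mpr (Or.inl ⟨hq, hqp⟩))
      · rintro ⟨h1, h2⟩ q hq
        rcases (hmemQ' q).mp hq with ⟨hqQ, _⟩ | rfl | rfl
        · exact h1 q hqQ
        · exact h1 p hpQ
        · exact fun h => h2 h.symm
    -- Q' is a partial config
    have hQ' : IsPartialConfig n Q' := by
      constructor
      · intro q hq
        rcases (hmemQ' q).mp hq with ⟨hqQ, _⟩ | rfl | rfl
        · exact hQ.1 hqQ
        · have := hQ.1 hpQ
          simp only [board, Finset.mem_product] at this ⊢
          exact ⟨hrmem 0, this.2⟩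
        · have := hQ.1 hpQ
          simp only [board, Finset.mem_product] at this ⊢
          exact ⟨this.1, hcmem 0⟩
      · have key : ∀ a ∈ Q', ∀ b ∈ Q', a ≠ b →
            a.1 ≠ b.1 ∧ a.2 ≠ b.2 ∧ a.1 + a.2 ≠ b.1 + b.2 ∧ a.1 - a.2 ≠ b.1 - b.2 := by
          have half : ∀ a, (a ∈ Q ∧ a ≠ p) → ∀ b, (b = n1 ∨ b = n2) →
              a.1 ≠ b.1 ∧ a.2 ≠ b.2 ∧ a.1 + a.2 ≠ b.1 + b.2 ∧ a.1 - a.2 ≠ b.1 - b.2 := by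
            rintro a ⟨haQ, hap⟩ b (rfl | rfl)
            · have hf := hfar a haQ hap
              exact ⟨fun h => hr0 a haQ h, fun h => (hQ.2 a haQ p hpQ hap).2.1 h,
                hf.1, hf.2.1⟩
            · have hf := hfar a haQ hap
              exact ⟨fun h => (hQ.2 a haQ p hpQ hap).1 h, fun h => hc0 a haQ h,
                hf.2.2.1, hf.2.2.2⟩
          have n1n2 : n1.1 ≠ n2.1 ∧ n1.2 ≠ n2.2 ∧ n1.1 + n1.2 ≠ n2.1 + n2.2 ∧
              n1.1 - n1.2 ≠ n2.1 - n2.2 := by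
            refine ⟨hrp1, fun h => hcp2 h.symm, ?_, ?_⟩ <;>
              simp only [hn1def, hn2def] <;> omega
          intro a ha b hb hab
          rcases (hmemQ' a).mp ha with haQ | ha1 | ha2 <;>
            rcases (hmemQ' b).mp hb with hbQ | hb1 | hb2
          · exact hQ.2 a haQ.1 b hbQ.1 hab
          · exact half a haQ b (Or.inl hb1)
          · exact half a haQ b (Or.inr hb2)
          · have := half b hbQ a (Or.inl ha1)
            exact ⟨this.1.symm, this.2.1.symm, fun h => this.2.2.1 h.symm,
              fun h => this.2.2.2 h.symm⟩
          · exact absurd (ha1.trans hb1.symm) hab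
          · subst ha1; subst hb2; exact n1n2
          · have := half b hbQ a (Or.inr ha2)
            exact ⟨this.1.symm, this.2.1.symm, fun h => this.2.2.1 h.symm,
              fun h => this.2.2.2 h.symm⟩
          · subst ha2; subst hb1
            exact ⟨n1n2.1.symm, n1n2.2.1.symm, fun h => n1n2.2.2.1 h.symm,
              fun h => n1n2.2.2.2 h.symm⟩
          · exact absurd (ha2.trans hb2.symm) hab
        exact key
    -- cardinality of Q'
    have hcard' : Q'.card = Q.card + 1 := by
      have hdisj : Disjoint (Q.erase p) ({n1, n2} : Finset (ℤ × ℤ)) := by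
        rw [Finset.disjoint_right]
        intro q hq
        simp only [Finset.mem_insert, Finset.mem_singleton] at hq
        rcases hq with rfl | rfl
        · exact fun h => hn1Q (Finset.mem_of_mem_erase h)
        · exact fun h => hn2Q (Finset.mem_of_mem_erase h)
      rw [hQ'def, Finset.card_union_of_disjoint hdisj,
        Finset.card_erase_of_mem hpQ, Finset.card_insert_of_notMem (by simpa using hn12),
        Finset.card_singleton]
      have : 1 ≤ Q.card := Finset.card_pos.mpr ⟨p, hpQ⟩
      omega
    -- absorber bound for Q'
    have habs' : ∀ a b : ℤ, (a, b) ∈ board n → 10 * k ≤ (absorbers Q' a b).card := by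
      intro a b hab
      have h1 := habs a b hab
      have h2 := absorbers_card_step hQ hp a b
      rw [← hQ'def] at h2
      omega
    -- coverage conditions for shifted families
    have hrcover' : ∀ a ∈ Finset.Icc 1 (n : ℤ),
        ((∀ q ∈ Q', q.1 ≠ a) ↔ ∃ i : Fin k, r i.succ = a) := by
      intro a ha
      rw [hrowQ' a, hrcover a ha]
      constructor
      · rintro ⟨⟨i, rfl⟩, h2⟩
        rcases Fin.eq_zero_or_eq_succ i with rfl | ⟨j, rfl⟩
        · exact absurd rfl h2
        · exact ⟨j, rfl⟩
      · rintro ⟨j, rfl⟩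
        exact ⟨⟨j.succ, rfl⟩, fun h => (Fin.succ_ne_zero j) (hrinj h)⟩
    have hccover' : ∀ b ∈ Finset.Icc 1 (n : ℤ),
        ((∀ q ∈ Q', q.2 ≠ b) ↔ ∃ i : Fin k, c i.succ = b) := by
      intro b hb
      rw [hcolQ' b, hccover b hb]
      constructor
      · rintro ⟨⟨i, rfl⟩, h2⟩
        rcases Fin.eq_zero_or_eq_succ i with rfl | ⟨j, rfl⟩
        · exact absurd rfl h2
        · exact ⟨j, rfl⟩
      · rintro ⟨j, rfl⟩
        exact ⟨⟨j.succ, rfl⟩, fun h => (Fin.succ_ne_zero j) (hcinj h)⟩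
    -- apply IH
    obtain ⟨R', hR'0, hR'step, hR'cfg, hR'card⟩ :=
      IH n Q' hQ' (by omega) habs' (fun i => r i.succ) (fun i => c i.succ)
        (fun i j h => Fin.succ_injective _ (hrinj h))
        (fun i j h => Fin.succ_injective _ (hcinj h))
        (fun i => hrmem _) (fun i => hcmem _) hrcover' hccover'
    set RR : Fin (k + 1 + 1) → Finset (ℤ × ℤ) := Fin.cons Q R' with hRRdef
    refine ⟨RR, rfl, ?_, ?_, ?_⟩
    · intro i
      rcases Fin.eq_zero_or_eq_succ i with rfl | ⟨j, rfl⟩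
      · refine ⟨p, by simpa [hRRdef] using hp, ?_⟩
        have e : RR ((0 : Fin (k+1)).succ) = Q' := by
          rw [hRRdef, Fin.cons_succ]; exact hR'0
        rw [e, show RR ((0 : Fin (k+1)).castSucc) = Q by simp [hRRdef]]
      · have h1 : (j.succ).castSucc = (j.castSucc).succ := (Fin.succ_castSucc j).symm
        have h2 : ((j.succ : Fin (k+1))).succ = (j.succ).succ := rfl
        rw [h1]
        obtain ⟨q, hq1, hq2⟩ := hR'step j
        refine ⟨q, ?_, ?_⟩
        · simpa [hRRdef, Fin.cons_succ] using hq1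
        · rw [h2, hRRdef]
          rw [Fin.cons_succ, Fin.cons_succ]
          exact hq2
    · have e : RR (Fin.last (k + 1)) = R' (Fin.last k) := by
        rw [show Fin.last (k + 1) = (Fin.last k).succ from rfl, hRRdef, Fin.cons_succ]
      rw [e]; exact hR'cfg
    · have e : RR (Fin.last (k + 1)) = R' (Fin.last k) := by
        rw [show Fin.last (k + 1) = (Fin.last k).succ from rfl, hRRdef, Fin.cons_succ]
      rw [e]; exact hR'card

/-- If Q has size T and is 10(n-T)-absorbing, then for any matching of the uncovered rows
with the uncovered columns, the absorption procedure succeeds: there is a sequence of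
k = n-T absorber swaps, each step having a nonempty absorber set, ending in a full
n-queens configuration. -/
theorem absorption_succeeds (n T : ℕ) (Q : Finset (ℤ × ℤ))
    (hQ : IsPartialConfig n Q) (hQcard : Q.card = T) (hT : T ≤ n)
    (habs : ∀ r c : ℤ, (r, c) ∈ board n → 10 * (n - T) ≤ (absorbers Q r c).card)
    (k : ℕ) (hk : k = n - T)
    (r c : Fin k → ℤ)
    (hrinj : Function.Injective r) (hcinj : Function.Injective c)
    (hrmem : ∀ i, r i ∈ Finset.Icc 1 (n : ℤ)) (hcmem : ∀ i, c i ∈ Finset.Icc 1 (n : ℤ))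
    (hrcover : ∀ a ∈ Finset.Icc 1 (n : ℤ), ((∀ q ∈ Q, q.1 ≠ a) ↔ ∃ i, r i = a))
    (hccover : ∀ b ∈ Finset.Icc 1 (n : ℤ), ((∀ q ∈ Q, q.2 ≠ b) ↔ ∃ i, c i = b)) :
    ∃ R : Fin (k + 1) → Finset (ℤ × ℤ), R 0 = Q ∧
      (∀ i : Fin k, ∃ p ∈ absorbers (R i.castSucc) (r i) (c i),
        R i.succ = ((R i.castSucc).erase p) ∪ {(r i, p.2), (p.1, c i)}) ∧
      IsPartialConfig n (R (Fin.last k)) ∧ (R (Fin.last k)).card = n := by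
  exact absorption_aux k n Q hQ (by omega) (by rw [← hk] at habs; exact habs)
    r c hrinj hcinj hrmem hcmem hrcover hccover
end

section
/- Let Q₁ ⊆ Q₂ ⊆ [n]² be partial toroidal n-queens configurations. Then for every (r,c) ∈ [n]², every safe absorber for (r,c) in Q₁ is a safe absorber for (r,c) in Q₂; i.e., S_{Q₁}(r,c) ⊆ S_{Q₂}(r,c). -/
open scoped Classical

/-- A partial toroidal n-queens configuration: at most one queen in each row, column,
and toroidal diagonal. -/
def IsPartialTorConfig (n : ℕ) (Q : Finset (ℤ × ℤ)) : Prop :=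
  Q ⊆ board n ∧ ∀ p ∈ Q, ∀ q ∈ Q, p ≠ q →
    p.1 ≠ q.1 ∧ p.2 ≠ q.2 ∧ ¬ (p.1 + p.2 ≡ q.1 + q.2 [ZMOD (n : ℤ)]) ∧
    ¬ (p.1 - p.2 ≡ q.1 - q.2 [ZMOD (n : ℤ)])

/-- The set S_Q(r,c) of safe absorbers for (r,c) in Q: absorbers such that all four
toroidal diagonals through (r,y) and (x,c) are occupied by Q outside the corresponding
non-toroidal diagonals. -/
def safeAbsorbers (n : ℕ) (Q : Finset (ℤ × ℤ)) (r c : ℤ) : Finset (ℤ × ℤ) :=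
  Q.filter (fun p =>
    p.1 + p.2 ≠ r + c ∧ p.1 - p.2 ≠ r - c ∧
    (∀ q ∈ Q, q ≠ p →
      q.1 + q.2 ≠ r + p.2 ∧ q.1 - q.2 ≠ r - p.2 ∧
      q.1 + q.2 ≠ p.1 + c ∧ q.1 - q.2 ≠ p.1 - c) ∧
    (∃ a ∈ Q, a.1 + a.2 ≡ r + p.2 [ZMOD (n : ℤ)] ∧ a.1 + a.2 ≠ r + p.2) ∧
    (∃ a ∈ Q, a.1 - a.2 ≡ r - p.2 [ZMOD (n : ℤ)] ∧ a.1 - a.2 ≠ r - p.2) ∧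
    (∃ a ∈ Q, a.1 + a.2 ≡ p.1 + c [ZMOD (n : ℤ)] ∧ a.1 + a.2 ≠ p.1 + c) ∧
    (∃ a ∈ Q, a.1 - a.2 ≡ p.1 - c [ZMOD (n : ℤ)] ∧ a.1 - a.2 ≠ p.1 - c))

/-- Safe absorbers survive: if Q₁ ⊆ Q₂ then S_{Q₁}(r,c) ⊆ S_{Q₂}(r,c). -/
theorem safe_absorbers_survive (n : ℕ) (Q₁ Q₂ : Finset (ℤ × ℤ))
    (h₁ : IsPartialTorConfig n Q₁) (h₂ : IsPartialTorConfig n Q₂) (hsub : Q₁ ⊆ Q₂)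
    (r c : ℤ) (hrc : (r, c) ∈ board n) :
    safeAbsorbers n Q₁ r c ⊆ safeAbsorbers n Q₂ r c := by
  intro p hp
  simp only [safeAbsorbers, Finset.mem_filter] at hp ⊢
  obtain ⟨hpQ, h1, h2, h3, ⟨a1, ha1Q, ha1m, ha1n⟩, ⟨a2, ha2Q, ha2m, ha2n⟩,
    ⟨a3, ha3Q, ha3m, ha3n⟩, ⟨a4, ha4Q, ha4m, ha4n⟩⟩ := hp
  refine ⟨hsub hpQ, h1, h2, ?_, ⟨a1, hsub ha1Q, ha1m, ha1n⟩, ⟨a2, hsub ha2Q, ha2m, ha2n⟩,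
    ⟨a3, hsub ha3Q, ha3m, ha3n⟩, ⟨a4, hsub ha4Q, ha4m, ha4n⟩⟩
  intro q hqQ hqp
  refine ⟨?_, ?_, ?_, ?_⟩
  · intro hq
    have haq : a1 ≠ q := fun h => ha1n (h ▸ hq)
    exact ((h₂.2 a1 (hsub ha1Q) q hqQ haq).2.2.1) (hq ▸ ha1m)
  · intro hq
    have haq : a2 ≠ q := fun h => ha2n (h ▸ hq)
    exact ((h₂.2 a2 (hsub ha2Q) q hqQ haq).2.2.2) (hq ▸ ha2m)
  · intro hq
    have haq : a3 ≠ q := fun h => ha3n (h ▸ hq)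
    exact ((h₂.2 a3 (hsub ha3Q) q hqQ haq).2.2.1) (hq ▸ ha3m)
  · intro hq
    have haq : a4 ≠ q := fun h => ha4n (h ▸ hq)
    exact ((h₂.2 a4 (hsub ha4Q) q hqQ haq).2.2.2) (hq ▸ ha4m)
end

section
/- Let R ⊆ [n]² and let R̃ ⊆ R be the set of positions in R that share no row, column, or toroidal diagonal with any other element of R. If R' = R ∪ {(x,y)} for some position (x,y), then the corresponding set R̃' satisfies |R̃ Δ R̃'| ≤ 5; in particular, adding a single point to R changes R̃ by at most 4 removals and 1 addition. -/
open scoped Classical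

/-- Two positions share a line (row, column, or toroidal diagonal). -/
def sharesLine (n : ℕ) (p q : ℤ × ℤ) : Prop :=
  p.1 = q.1 ∨ p.2 = q.2 ∨ p.1 + p.2 ≡ q.1 + q.2 [ZMOD (n : ℤ)] ∨
    p.1 - p.2 ≡ q.1 - q.2 [ZMOD (n : ℤ)]

/-- R̃: the elements of R threatened by no other element of R. -/
noncomputable def unthreatened (n : ℕ) (R : Finset (ℤ × ℤ)) : Finset (ℤ × ℤ) :=
  R.filter (fun p => ∀ q ∈ R, q ≠ p → ¬ sharesLine n q p)

/-- Adding one point to R changes R̃ by at most 4 removals and 1 addition,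
hence by at most 5 in symmetric difference. -/
theorem unthreatened_lipschitz (n : ℕ) (R : Finset (ℤ × ℤ)) (hR : R ⊆ board n)
    (x y : ℤ) (hxy : (x, y) ∈ board n) :
    ((unthreatened n R \ unthreatened n (insert (x, y) R)) ∪
      (unthreatened n (insert (x, y) R) \ unthreatened n R)).card ≤ 5 ∧
    (unthreatened n R \ unthreatened n (insert (x, y) R)).card ≤ 4 ∧
    (unthreatened n (insert (x, y) R) \ unthreatened n R).card ≤ 1 := by
  classical
  set p : ℤ × ℤ := (x, y) with hp
  set S : Finset (ℤ × ℤ) := unthreatened n R with hS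
  -- additions are contained in {p}
  have hadd : unthreatened n (insert p R) \ S ⊆ {p} := by
    intro q hq
    simp only [hS, Finset.mem_sdiff, unthreatened, Finset.mem_filter, Finset.mem_insert] at hq
    obtain ⟨⟨hq1, hq2⟩, hq3⟩ := hq
    rcases hq1 with h | h
    · simp [h]
    · exact absurd ⟨h, fun r hr hne => hq2 r (Or.inr hr) hne⟩ hq3
  have hadd1 : (unthreatened n (insert p R) \ S).card ≤ 1 := by
    calc (unthreatened n (insert p R) \ S).card ≤ ({p} : Finset (ℤ × ℤ)).card :=
          Finset.card_le_card hadd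
      _ = 1 := Finset.card_singleton p
  -- each "line through p" contains at most one unthreatened point
  have key : ∀ (P : ℤ × ℤ → Prop) (inst : DecidablePred P),
      (∀ a b, P a → P b → sharesLine n a b) → (@Finset.filter _ P inst S).card ≤ 1 := by
    intro P inst hP
    apply Finset.card_le_one.2
    intro a ha b hb
    by_contra hne
    simp only [hS, Finset.mem_filter, unthreatened] at ha hb
    exact hb.1.2 a ha.1.1 hne (hP a b ha.2 hb.2)
  -- removals are contained in the union of the four lines
  have hrem : S \ unthreatened n (insert p R) ⊆
      (S.filter (fun q => q.1 = x)) ∪ (S.filter (fun q => q.2 = y)) ∪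
      (S.filter (fun q => q.1 + q.2 ≡ x + y [ZMOD (n : ℤ)])) ∪
      (S.filter (fun q => q.1 - q.2 ≡ x - y [ZMOD (n : ℤ)])) := by
    intro q hq
    obtain ⟨hqS, hq2⟩ := Finset.mem_sdiff.1 hq
    have hqS' := hqS
    simp only [hS, unthreatened, Finset.mem_filter] at hqS'
    obtain ⟨hqR, hqun⟩ := hqS'
    -- q fails the filter in insert p R
    have : ¬ (∀ r ∈ insert p R, r ≠ q → ¬ sharesLine n r q) := by
      intro h
      apply hq2
      rw [unthreatened, Finset.mem_filter]
      exact ⟨Finset.mem_insert_of_mem hqR, h⟩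
    push_neg at this
    obtain ⟨r, hr, hrne, hrs⟩ := this
    rcases Finset.mem_insert.1 hr with hrp | hrR
    · -- r = p, so p shares a line with q
      subst hrp
      simp only [sharesLine, hp] at hrs
      simp only [Finset.mem_union, Finset.mem_filter]
      rcases hrs with h | h | h | h
      · exact Or.inl (Or.inl (Or.inl ⟨hqS, h.symm⟩))
      · exact Or.inl (Or.inl (Or.inr ⟨hqS, h.symm⟩))
      · exact Or.inl (Or.inr ⟨hqS, h.symm⟩)
      · exact Or.inr ⟨hqS, h.symm⟩
    · exact absurd hrs (hqun r hrR hrne)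
  have four : ∀ (A B C D : Finset (ℤ × ℤ)), A.card ≤ 1 → B.card ≤ 1 → C.card ≤ 1 →
      D.card ≤ 1 → (A ∪ B ∪ C ∪ D).card ≤ 4 := by
    intro A B C D hA hB hC hD
    calc (A ∪ B ∪ C ∪ D).card ≤ (A ∪ B ∪ C).card + D.card := Finset.card_union_le _ _
      _ ≤ (A ∪ B).card + C.card + D.card :=
          Nat.add_le_add_right (Finset.card_union_le _ _) _
      _ ≤ A.card + B.card + C.card + D.card :=
          Nat.add_le_add_right (Nat.add_le_add_right (Finset.card_union_le _ _) _) _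
      _ ≤ 1 + 1 + 1 + 1 := Nat.add_le_add (Nat.add_le_add (Nat.add_le_add hA hB) hC) hD
      _ = 4 := rfl
  have hrem4 : (S \ unthreatened n (insert p R)).card ≤ 4 :=
    le_trans (Finset.card_le_card hrem) (four _ _ _ _
      (key _ _ (fun a b ha hb => Or.inl (ha.trans hb.symm)))
      (key _ _ (fun a b ha hb => Or.inr (Or.inl (ha.trans hb.symm))))
      (key _ _ (fun a b ha hb => Or.inr (Or.inr (Or.inl (ha.trans hb.symm)))))
      (key _ _ (fun a b ha hb => Or.inr (Or.inr (Or.inr (ha.trans hb.symm))))))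
  refine ⟨?_, hrem4, hadd1⟩
  calc _ ≤ (S \ unthreatened n (insert p R)).card +
        (unthreatened n (insert p R) \ S).card := Finset.card_union_le _ _
    _ ≤ 4 + 1 := Nat.add_le_add hrem4 hadd1
    _ = 5 := rfl
end
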